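/- Let X be a compact metric space and f : X → X a continuous map. If z ∈ X is such that for every ε > 0 there is an ε-chain from x to z, and y = f^m(x) for some m ≥ 0, then either z lies on the forward orbit of x (z = f^n(x) for some n ≥ 0) or for every ε > 0 there is an ε-chain from y to z. Consequently the infinitesimal chains stream of f is an Ωstream. -/

import Mathlib

/-- An `ε`-chain for `f` from `x` to `y`. -/
def HasChain {X : Type*} [MetricSpace X] (f : X → X) (ε : ℝ) (x y : X) : Prop :=
  ∃ k : ℕ, 1 ≤ k ∧ ∃ z : ℕ → X, z 0 = x ∧ z k = y ∧
    ∀ i < k, dist (f (z i)) (z (i + 1)) ≤ ε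

/-- Shadowing of short prefixes of chains: for any `ε > 0` and length `m`, there is
`0 < δ ≤ ε` such that any `δ`-chain starting at `x` stays within `ε` of the true orbit
of `x` for its first `m` steps. -/
lemma shadow_prefix {X : Type*} [MetricSpace X] [CompactSpace X]
    (f : X → X) (hf : Continuous f) (x : X) (m : ℕ) :
    ∀ ε > (0 : ℝ), ∃ δ > (0 : ℝ), δ ≤ ε ∧ ∀ (k : ℕ) (c : ℕ → X), c 0 = x →
      (∀ i < k, dist (f (c i)) (c (i + 1)) ≤ δ) →
      ∀ i ≤ m, i ≤ k → dist (c i) (f^[i] x) ≤ ε := by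
  induction m with
  | zero =>
    intro ε hε
    refine ⟨ε, hε, le_refl _, fun k c hc0 _ i hi _ => ?_⟩
    interval_cases i
    simp only [hc0, Function.iterate_zero_apply, dist_self]
    linarith
  | succ m ih =>
    intro ε hε
    have huc : UniformContinuous f := CompactSpace.uniformContinuous_of_continuous hf
    obtain ⟨β, hβ, hβ'⟩ := Metric.uniformContinuous_iff.mp huc (ε / 2) (by linarith)
    have hpos : (0 : ℝ) < min (β / 2) (ε / 2) := by
      apply lt_min <;> linarith
    obtain ⟨δ, hδ, hδle, hδc⟩ := ih (min (β / 2) (ε / 2)) hpos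
    refine ⟨δ, hδ, ?_, fun k c hc0 hstep i hi hik => ?_⟩
    · calc δ ≤ min (β / 2) (ε / 2) := hδle
        _ ≤ ε / 2 := min_le_right _ _
        _ ≤ ε := by linarith
    rcases Nat.lt_or_ge i (m + 1) with hlt | hge
    · have := hδc k c hc0 hstep i (by omega) hik
      calc dist (c i) (f^[i] x) ≤ min (β / 2) (ε / 2) := this
        _ ≤ ε / 2 := min_le_right _ _
        _ ≤ ε := by linarith
    · have hieq : i = m + 1 := by omega
      subst hieq
      have hm : dist (c m) (f^[m] x) ≤ min (β / 2) (ε / 2) :=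
        hδc k c hc0 hstep m (by omega) (by omega)
      have hmβ : dist (c m) (f^[m] x) < β :=
        lt_of_le_of_lt (hm.trans (min_le_left _ _)) (by linarith)
      have h1 : dist (f (c m)) (f (f^[m] x)) < ε / 2 := hβ' hmβ
      have h2 : dist (f (c m)) (c (m + 1)) ≤ δ := hstep m (by omega)
      have h3 : δ ≤ ε / 2 := hδle.trans (min_le_right _ _)
      rw [Function.iterate_succ_apply']
      calc dist (c (m + 1)) (f (f^[m] x))
          ≤ dist (c (m + 1)) (f (c m)) + dist (f (c m)) (f (f^[m] x)) := dist_triangle _ _ _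
        _ = dist (f (c m)) (c (m + 1)) + dist (f (c m)) (f (f^[m] x)) := by rw [dist_comm]
        _ ≤ ε := by linarith

/-- on a compact metric space, if there are `ε`-chains from `x` to `z`
for every `ε > 0` and `y = f^[m] x` is on the forward orbit of `x`, then either `z` is
on the forward orbit of `x` or there are `ε`-chains from `y` to `z` for every `ε > 0`.
Consequently the infinitesimal chains stream of `f` is an Ωstream. -/
theorem stmt_19 {X : Type*} [MetricSpace X] [CompactSpace X]
    (f : X → X) (hf : Continuous f)
    (x z : X) (hchain : ∀ ε > (0 : ℝ), HasChain f ε x z) (m : ℕ) :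
    (∃ n : ℕ, f^[n] x = z) ∨ ∀ ε > (0 : ℝ), HasChain f ε (f^[m] x) z := by
  by_cases h : ∃ n : ℕ, f^[n] x = z
  · exact Or.inl h
  right
  intro ε hε
  push_neg at h
  have hdistpos : ∀ i : ℕ, 0 < dist z (f^[i] x) := by
    intro i
    rw [dist_pos]
    exact fun he => h i he.symm
  -- minimum distance from z to the first m+1 orbit points
  set r : ℝ := (Finset.range (m + 1)).inf' ⟨0, by simp⟩ (fun i => dist z (f^[i] x)) with hr
  have hrpos : 0 < r := by
    rw [hr]
    exact (Finset.lt_inf'_iff ..).2 fun i _ => hdistpos i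
  have huc : UniformContinuous f := CompactSpace.uniformContinuous_of_continuous hf
  obtain ⟨β, hβ, hβ'⟩ := Metric.uniformContinuous_iff.mp huc (ε / 2) (by linarith)
  have hpos : (0 : ℝ) < min (min (β / 2) (ε / 2)) (r / 2) := by
    apply lt_min (lt_min (by linarith) (by linarith)) (by linarith)
  obtain ⟨δ, hδ, hδle, hδc⟩ := shadow_prefix f hf x m _ hpos
  obtain ⟨k, hk1, c, hc0, hck, hstep⟩ := hchain δ hδ
  -- the chain must be longer than m
  have hkm : m < k := by
    by_contra hkm
    push_neg at hkm
    have := hδc k c hc0 hstep k hkm (le_refl k)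
    rw [hck] at this
    have hle : r ≤ dist z (f^[k] x) :=
      Finset.inf'_le _ (Finset.mem_range.mpr (by omega))
    have : dist z (f^[k] x) ≤ r / 2 :=
      this.trans (min_le_right _ _)
    linarith
  -- build the chain from f^[m] x to z
  refine ⟨k - m, by omega, fun j => if j = 0 then f^[m] x else c (m + j), by simp, ?_, ?_⟩
  · have : k - m ≠ 0 := by omega
    simp only [this, if_false]
    rw [show m + (k - m) = k by omega, hck]
  · intro j hj
    rcases Nat.eq_zero_or_pos j with rfl | hjpos
    · simp only [if_pos rfl, Nat.zero_add, if_neg (by norm_num : (1 : ℕ) ≠ 0)]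
      have hm : dist (c m) (f^[m] x) ≤ min (min (β / 2) (ε / 2)) (r / 2) :=
        hδc k c hc0 hstep m (le_refl m) (by omega)
      have hmβ : dist (c m) (f^[m] x) < β := by
        have := hm.trans ((min_le_left _ _).trans (min_le_left _ _))
        linarith
      have h1 : dist (f (c m)) (f (f^[m] x)) < ε / 2 := hβ' hmβ
      have h2 : dist (f (c m)) (c (m + 1)) ≤ δ := hstep m hkm
      have h3 : δ ≤ ε / 2 := hδle.trans ((min_le_left _ _).trans (min_le_right _ _))
      calc dist (f (f^[m] x)) (c (m + 1))
          ≤ dist (f (f^[m] x)) (f (c m)) + dist (f (c m)) (c (m + 1)) := dist_triangle _ _ _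
        _ = dist (f (c m)) (f (f^[m] x)) + dist (f (c m)) (c (m + 1)) := by rw [dist_comm]
        _ ≤ ε := by linarith
    · have hj0 : j ≠ 0 := by omega
      have hj10 : j + 1 ≠ 0 := by omega
      simp only [if_neg hj0, if_neg hj10]
      have : dist (f (c (m + j))) (c (m + j + 1)) ≤ δ := hstep (m + j) (by omega)
      have h3 : δ ≤ ε / 2 := hδle.trans ((min_le_left _ _).trans (min_le_right _ _))
      rw [show m + (j + 1) = m + j + 1 by omega]
      linarith
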